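/- Time-ordered integral identity for divided differences of exponentials: for t > 0 and complex γ₁,...,γ_q, (i)^q ∫₀^t dt_q ∫₀^{t_q} dt_{q−1} ... ∫₀^{t₂} dt₁ e^{i(γ_q t_q + ... + γ₁ t₁)} = e^{it[x₀, x₁, ..., x_{q−1}, 0]}, where x_j = ∑_{k=j+1}^{q} γ_k and e^{it[·]} denotes the divided difference of x ↦ e^{ixt} at the indicated nodes. -/

import Mathlib

open MeasureTheory Complex

/-- The standard `q`-simplex `S_q = {u ∈ ℝ₊^q : ∑ₖ uₖ ≤ 1}`. -/
def stdSimplexSet (q : ℕ) : Set (Fin q → ℝ) :=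
  {u | (∀ k, 0 ≤ u k) ∧ ∑ k, u k ≤ 1}

/-- Divided difference of `x ↦ e^{ixt}` at the (possibly repeated) complex nodes
`w₀, …, w_q`, defined through the Hermite–Genocchi simplex integral (which is the
standard confluent/derivative extension for this entire function). -/
noncomputable def expDD (t : ℂ) {q : ℕ} (w : Fin (q + 1) → ℂ) : ℂ :=
  ∫ u in stdSimplexSet q,
    (Complex.I * t) ^ q *
      Complex.exp (Complex.I *
        ((1 - ∑ k, (u k : ℂ)) * w 0 + ∑ k, (u k : ℂ) * w k.succ) * t)

/-- The iterated time-ordered integral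
`∫₀^t dt_q e^{iγ_q t_q} ∫₀^{t_q} dt_{q-1} e^{iγ_{q-1} t_{q-1}} ⋯ ∫₀^{t₂} dt₁ e^{iγ₁ t₁}`,
the list giving the frequencies from the outermost variable inwards. -/
noncomputable def orderedInt : List ℂ → ℝ → ℂ
  | [], _ => 1
  | γ :: rest, t => ∫ τ in (0 : ℝ)..t, Complex.exp (Complex.I * γ * τ) * orderedInt rest τ

lemma measurableSet_sub (q : ℕ) (c : ℝ) :
    MeasurableSet {v : Fin q → ℝ | (∀ k, 0 ≤ v k) ∧ ∑ k, v k ≤ c} := by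
  have h1 : MeasurableSet {u : Fin q → ℝ | ∀ k, 0 ≤ u k} := by
    rw [Set.setOf_forall]
    exact MeasurableSet.iInter fun k => measurableSet_le measurable_const (measurable_pi_apply k)
  have h2 : MeasurableSet {u : Fin q → ℝ | ∑ k, u k ≤ c} :=
    measurableSet_le (Finset.measurable_sum _ fun k _ => measurable_pi_apply k) measurable_const
  exact h1.inter h2

lemma stdSimplexSet_measurableSet (q : ℕ) : MeasurableSet (stdSimplexSet q) :=
  measurableSet_sub q 1

lemma stdSimplexSet_isCompact (q : ℕ) : IsCompact (stdSimplexSet q) := by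
  have hsub : stdSimplexSet q ⊆ Set.pi Set.univ (fun _ : Fin q => Set.Icc (0:ℝ) 1) := by
    intro u hu k _
    refine ⟨hu.1 k, ?_⟩
    calc u k ≤ ∑ j, u j := Finset.single_le_sum (fun j _ => hu.1 j) (Finset.mem_univ k)
    _ ≤ 1 := hu.2
  have hclosed : IsClosed (stdSimplexSet q) := by
    have h1 : IsClosed {u : Fin q → ℝ | ∀ k, 0 ≤ u k} := by
      rw [Set.setOf_forall]
      exact isClosed_iInter fun k => isClosed_le continuous_const (continuous_apply k)
    have h2 : IsClosed {u : Fin q → ℝ | ∑ k, u k ≤ 1} :=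
      isClosed_le (continuous_finset_sum _ fun k _ => continuous_apply k) continuous_const
    exact h1.inter h2
  exact (isCompact_univ_pi fun _ => isCompact_Icc).of_isClosed_subset hclosed hsub

lemma integrableOn_simplex {q : ℕ} {G : (Fin q → ℝ) → ℂ} (hG : Continuous G) :
    IntegrableOn G (stdSimplexSet q) :=
  hG.continuousOn.integrableOn_compact (stdSimplexSet_isCompact q)

lemma split_last (q : ℕ) (F : (Fin (q + 1) → ℝ) → ℂ) (hFint : Integrable F) :
    ∫ x, F x = ∫ x : ℝ, ∫ v : Fin q → ℝ, F (Fin.snoc v x) := by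
  have hmp := (volume_preserving_piFinSuccAbove (fun _ : Fin (q+1) => ℝ) (Fin.last q)).symm
  rw [← hmp.integral_comp' F]
  have hint2 : Integrable (fun p : ℝ × (Fin q → ℝ) =>
      F ((MeasurableEquiv.piFinSuccAbove (fun _ : Fin (q+1) => ℝ) (Fin.last q)).symm p)) := by
    exact (hmp.integrable_comp_emb (MeasurableEquiv.measurableEmbedding _)).2 hFint
  rw [Measure.volume_eq_prod] at hint2 ⊢
  rw [integral_prod _ hint2]
  congr 1
  ext x
  congr 1
  ext v
  congr 1
  simp [MeasurableEquiv.piFinSuccAbove_symm_apply, Fin.snocEquiv]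
lemma cone_formula (q : ℕ) (G : (Fin (q + 1) → ℝ) → ℂ) (hG : Continuous G) :
    (∫ u in stdSimplexSet (q + 1), G u)
      = ∫ s in (0:ℝ)..1, (s ^ q : ℝ) •
          ∫ u in stdSimplexSet q, G (Fin.snoc (s • u) (1 - s)) := by
  classical
  set F : (Fin (q+1) → ℝ) → ℂ := (stdSimplexSet (q+1)).indicator G with hFdef
  have hS := stdSimplexSet_measurableSet (q+1)
  have hFint : Integrable F := (integrable_indicator_iff hS).2 (integrableOn_simplex hG)
  have key : (∫ u in stdSimplexSet (q+1), G u)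
      = ∫ x : ℝ, ∫ v : Fin q → ℝ, F (Fin.snoc v x) := by
    rw [← integral_indicator hS]
    exact split_last q F hFint
  rw [key]
  have hzero : ∀ x : ℝ, x ∉ Set.Icc (0:ℝ) 1 →
      (∫ v : Fin q → ℝ, F (Fin.snoc v x)) = 0 := by
    intro x hx
    have hv : ∀ v : Fin q → ℝ, F (Fin.snoc v x) = 0 := by
      intro v
      apply Set.indicator_of_notMem
      rintro ⟨h1, h2⟩
      have hx0 : 0 ≤ x := by simpa using h1 (Fin.last q)
      rw [Fin.sum_univ_castSucc] at h2
      simp only [Fin.snoc_castSucc, Fin.snoc_last] at h2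
      have h0 : 0 ≤ ∑ k : Fin q, v k :=
        Finset.sum_nonneg fun k _ => by simpa using h1 k.castSucc
      exact hx ⟨hx0, by linarith⟩
    simp [hv]
  rw [← setIntegral_eq_integral_of_forall_compl_eq_zero hzero]
  rw [integral_Icc_eq_integral_Ioc, ← intervalIntegral.integral_of_le zero_le_one]
  have hsub := intervalIntegral.integral_comp_sub_left
    (a := 0) (b := 1) (fun x => ∫ v : Fin q → ℝ, F (Fin.snoc v x)) 1
  norm_num at hsub
  rw [← hsub]
  rw [intervalIntegral.integral_of_le zero_le_one, intervalIntegral.integral_of_le zero_le_one]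
  refine setIntegral_congr_fun measurableSet_Ioc ?_
  intro s hs
  obtain ⟨hs0, hs1⟩ := hs
  simp only
  set A : Set (Fin q → ℝ) := {v | (∀ k, 0 ≤ v k) ∧ ∑ k, v k ≤ s} with hA
  set H : (Fin q → ℝ) → ℂ := A.indicator (fun v => G (Fin.snoc v (1 - s))) with hH
  have hFH : ∀ v : Fin q → ℝ, F (Fin.snoc v (1 - s)) = H v := by
    intro v
    have hiff : Fin.snoc v (1-s) ∈ stdSimplexSet (q+1) ↔ v ∈ A := by
      constructor
      · rintro ⟨h1, h2⟩
        refine ⟨fun k => by simpa using h1 k.castSucc, ?_⟩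
        rw [Fin.sum_univ_castSucc] at h2
        simp only [Fin.snoc_castSucc, Fin.snoc_last] at h2
        linarith
      · rintro ⟨h1, h2⟩
        constructor
        · intro j
          refine Fin.lastCases ?_ ?_ j
          · simp only [Fin.snoc_last]; linarith
          · intro k; simpa using h1 k
        · rw [Fin.sum_univ_castSucc]
          simp only [Fin.snoc_castSucc, Fin.snoc_last]
          linarith
    by_cases hv : v ∈ A
    · rw [hH, Set.indicator_of_mem hv, hFdef, Set.indicator_of_mem (hiff.2 hv)]
    · rw [hH, Set.indicator_of_notMem hv, hFdef,
        Set.indicator_of_notMem (fun h => hv (hiff.1 h))]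
  simp_rw [hFH]
  have hcv := MeasureTheory.Measure.integral_comp_smul (volume : Measure (Fin q → ℝ)) H s
  rw [show Module.finrank ℝ (Fin q → ℝ) = q from Module.finrank_fin_fun ℝ] at hcv
  have hsq : (0:ℝ) < s ^ q := pow_pos hs0 q
  rw [abs_of_pos (inv_pos.2 hsq)] at hcv
  have h2 : ∫ v, H v = s ^ q • ∫ u, H (s • u) := by
    rw [hcv, smul_smul, mul_inv_cancel₀ hsq.ne', one_smul]
  rw [h2]
  congr 1
  have hHs : ∀ u : Fin q → ℝ, H (s • u)
      = (stdSimplexSet q).indicator (fun u => G (Fin.snoc (s • u) (1 - s))) u := by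
    intro u
    have hiff2 : s • u ∈ A ↔ u ∈ stdSimplexSet q := by
      constructor
      · rintro ⟨h1, h2⟩
        refine ⟨fun k => ?_, ?_⟩
        · have := h1 k
          simp only [Pi.smul_apply, smul_eq_mul] at this
          nlinarith
        · have h3 : ∑ k, s * u k ≤ s := by
            simpa [Pi.smul_apply, smul_eq_mul] using h2
          rw [← Finset.mul_sum] at h3
          nlinarith
      · rintro ⟨h1, h2⟩
        refine ⟨fun k => ?_, ?_⟩
        · simp only [Pi.smul_apply, smul_eq_mul]
          exact mul_nonneg hs0.le (h1 k)
        · have : ∑ k, (s • u) k = s * ∑ k, u k := by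
            simp [Pi.smul_apply, smul_eq_mul, Finset.mul_sum]
          rw [this]
          nlinarith
    by_cases hu : u ∈ stdSimplexSet q
    · rw [hH, Set.indicator_of_mem (hiff2.2 hu), Set.indicator_of_mem hu]
    · rw [hH, Set.indicator_of_notMem (fun h => hu (hiff2.1 h)), Set.indicator_of_notMem hu]
  simp_rw [hHs]
  rw [integral_indicator (stdSimplexSet_measurableSet q)]

lemma ofFn_reverse_succ {q : ℕ} (γ : Fin (q + 1) → ℂ) :
    (List.ofFn γ).reverse
      = γ (Fin.last q) :: (List.ofFn (fun i : Fin q => γ i.castSucc)).reverse := by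
  rw [List.ofFn_succ', List.concat_eq_append, List.reverse_append,
    List.reverse_singleton, List.singleton_append]

lemma key_lemma (q : ℕ) : ∀ t : ℝ, 0 ≤ t → ∀ γ : Fin q → ℂ,
    Complex.I ^ q * orderedInt ((List.ofFn γ).reverse) t =
      expDD (t : ℝ) (fun j : Fin (q + 1) =>
        ∑ k : Fin q, if (j : ℕ) ≤ (k : ℕ) then γ k else 0) := by
  induction q with
  | zero =>
    intro t ht γ
    have hset : stdSimplexSet 0 = Set.univ := by
      ext u; simp [stdSimplexSet]
    simp [orderedInt, expDD, hset, MeasureTheory.volume_pi, MeasureTheory.Measure.pi_univ, Measure.real]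
  | succ q IH =>
    intro t ht γ
    rw [ofFn_reverse_succ γ]
    rw [show orderedInt (γ (Fin.last q) :: (List.ofFn fun i : Fin q => γ i.castSucc).reverse) t
        = ∫ τ in (0:ℝ)..t, Complex.exp (Complex.I * γ (Fin.last q) * (τ:ℂ)) *
            orderedInt ((List.ofFn fun i : Fin q => γ i.castSucc).reverse) τ from rfl]
    set γl : ℂ := γ (Fin.last q) with hγl
    set γ' : Fin q → ℂ := fun i : Fin q => γ i.castSucc with hγ'
    set w : Fin (q + 1 + 1) → ℂ :=
      (fun j : Fin (q + 1 + 1) => ∑ k : Fin (q + 1), if (j : ℕ) ≤ (k : ℕ) then γ k else 0)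
      with hw
    set w' : Fin (q + 1) → ℂ :=
      (fun j : Fin (q + 1) => ∑ k : Fin q, if (j : ℕ) ≤ (k : ℕ) then γ' k else 0) with hw'
    have hnode : ∀ j : Fin (q + 1), w (Fin.castSucc j) = w' j + γl := by
      intro j
      rw [hw, hw', hγl, hγ']
      simp only
      rw [Fin.sum_univ_castSucc]
      simp only [Fin.coe_castSucc, Fin.val_last]
      rw [if_pos (Nat.lt_succ_iff.mp j.isLt)]
    have hwlast : w (Fin.last (q + 1)) = 0 := by
      rw [hw]
      apply Finset.sum_eq_zero
      intro k _
      rw [if_neg]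
      simp only [Fin.val_last]
      have := k.isLt
      omega
    set E : (Fin q → ℝ) → ℂ := fun u =>
      (1 - ∑ k, (u k : ℂ)) * (w' 0 + γl) + ∑ k : Fin q, (u k : ℂ) * (w' k.succ + γl) with hE
    set f : ℝ → ℂ := fun τ => ∫ u in stdSimplexSet q,
      Complex.I * (Complex.I * (τ : ℂ)) ^ q * Complex.exp (Complex.I * E u * (τ : ℂ)) with hf
    have hLHS : Complex.I ^ (q + 1) * ∫ τ in (0:ℝ)..t,
          Complex.exp (Complex.I * γl * (τ : ℂ)) * orderedInt ((List.ofFn γ').reverse) τ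
        = ∫ τ in (0:ℝ)..t, f τ := by
      rw [← intervalIntegral.integral_const_mul]
      apply intervalIntegral.integral_congr
      intro τ hτ
      rw [Set.uIcc_of_le ht] at hτ
      simp only
      rw [show Complex.I ^ (q + 1) *
            (Complex.exp (Complex.I * γl * (τ : ℂ)) * orderedInt ((List.ofFn γ').reverse) τ)
          = (Complex.I * Complex.exp (Complex.I * γl * (τ : ℂ))) *
            (Complex.I ^ q * orderedInt ((List.ofFn γ').reverse) τ) from by ring]
      rw [IH τ hτ.1 γ', ← hw']
      rw [show expDD ((τ : ℝ) : ℂ) w' = ∫ u in stdSimplexSet q,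
            (Complex.I * (τ : ℂ)) ^ q * Complex.exp (Complex.I *
              ((1 - ∑ k, (u k : ℂ)) * w' 0 + ∑ k : Fin q, (u k : ℂ) * w' k.succ) * (τ : ℂ))
          from by simp only [expDD]]
      rw [hf]
      simp only
      rw [← MeasureTheory.integral_const_mul]
      refine integral_congr_ae (Filter.Eventually.of_forall fun u => ?_)
      beta_reduce
      have hdist : ∑ k : Fin q, (u k : ℂ) * (w' k.succ + γl)
          = (∑ k : Fin q, (u k : ℂ) * w' k.succ) + (∑ k : Fin q, (u k : ℂ)) * γl := by
        simp_rw [mul_add]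
        rw [Finset.sum_add_distrib, ← Finset.sum_mul]
      have hargs : Complex.I * E u * (τ : ℂ)
          = Complex.I * γl * (τ : ℂ) + Complex.I *
            ((1 - ∑ k, (u k : ℂ)) * w' 0 + ∑ k : Fin q, (u k : ℂ) * w' k.succ) * (τ : ℂ) := by
        rw [hE]
        simp only
        rw [hdist]
        ring
      rw [hargs, Complex.exp_add]
      ring
    have hcont : Continuous (fun u' : Fin (q + 1) → ℝ =>
        (Complex.I * (t : ℂ)) ^ (q + 1) * Complex.exp (Complex.I *
          ((1 - ∑ k, (u' k : ℂ)) * w 0 + ∑ k : Fin (q + 1), (u' k : ℂ) * w k.succ) * (t : ℂ))) := by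
      refine continuous_const.mul (Complex.continuous_exp.comp ?_)
      refine (Continuous.mul (continuous_const.mul ?_) continuous_const)
      refine Continuous.add (Continuous.mul ?_ continuous_const) ?_
      · exact continuous_const.sub
          (continuous_finset_sum _ fun k _ => Complex.continuous_ofReal.comp (continuous_apply k))
      · exact continuous_finset_sum _ fun k _ =>
          (Complex.continuous_ofReal.comp (continuous_apply k)).mul continuous_const
    have hRHS : expDD ((t : ℝ) : ℂ) w = ∫ s in (0:ℝ)..1, (s ^ q : ℝ) •
        ∫ u in stdSimplexSet q,
          (Complex.I * (t : ℂ)) ^ (q + 1) * Complex.exp (Complex.I *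
            ((1 - ∑ k : Fin (q + 1), ((Fin.snoc (s • u) (1 - s) : Fin (q + 1) → ℝ) k : ℂ)) * w 0 +
             ∑ k : Fin (q + 1), ((Fin.snoc (s • u) (1 - s) : Fin (q + 1) → ℝ) k : ℂ) * w k.succ)
            * (t : ℂ)) := by
      have hc := cone_formula q (fun u' : Fin (q + 1) → ℝ =>
        (Complex.I * (t : ℂ)) ^ (q + 1) * Complex.exp (Complex.I *
          ((1 - ∑ k, (u' k : ℂ)) * w 0 + ∑ k : Fin (q + 1), (u' k : ℂ) * w k.succ) * (t : ℂ)))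
        hcont
      simpa only [expDD] using hc
    rw [hLHS, hRHS]
    have hcml := intervalIntegral.smul_integral_comp_mul_left (a := 0) (b := 1) f t
    rw [mul_zero, mul_one] at hcml
    rw [← hcml, ← intervalIntegral.integral_smul]
    apply intervalIntegral.integral_congr
    intro s _
    simp only
    rw [hf]
    simp only
    rw [← integral_smul, ← integral_smul]
    refine integral_congr_ae (Filter.Eventually.of_forall fun u => ?_)
    beta_reduce
    have hsnocsum : ∑ k : Fin (q + 1), ((Fin.snoc (s • u) (1 - s) : Fin (q + 1) → ℝ) k : ℂ)
        = (s : ℂ) * (∑ k, (u k : ℂ)) + (1 - (s : ℂ)) := by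
      rw [Fin.sum_univ_castSucc]
      simp only [Fin.snoc_castSucc, Fin.snoc_last, Pi.smul_apply, smul_eq_mul]
      push_cast
      rw [Finset.mul_sum]
    have hsnocsum2 : ∑ k : Fin (q + 1),
          ((Fin.snoc (s • u) (1 - s) : Fin (q + 1) → ℝ) k : ℂ) * w k.succ
        = (s : ℂ) * ∑ k : Fin q, (u k : ℂ) * w (Fin.castSucc k.succ) := by
      rw [Fin.sum_univ_castSucc]
      simp only [Fin.snoc_castSucc, Fin.snoc_last, Pi.smul_apply, smul_eq_mul,
        Fin.succ_last, hwlast, mul_zero, add_zero, Fin.succ_castSucc]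
      push_cast
      rw [Finset.mul_sum]
      exact Finset.sum_congr rfl fun k _ => by ring
    have hEnode : E u = (1 - ∑ k, (u k : ℂ)) * w 0
        + ∑ k : Fin q, (u k : ℂ) * w (Fin.castSucc k.succ) := by
      simp only [hE, ← hnode, Fin.castSucc_zero]
    have hexp : Complex.I *
          ((1 - ∑ k : Fin (q + 1), ((Fin.snoc (s • u) (1 - s) : Fin (q + 1) → ℝ) k : ℂ)) * w 0 +
           ∑ k : Fin (q + 1), ((Fin.snoc (s • u) (1 - s) : Fin (q + 1) → ℝ) k : ℂ) * w k.succ)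
          * (t : ℂ)
        = Complex.I * E u * ((t * s : ℝ) : ℂ) := by
      rw [hsnocsum, hsnocsum2, hEnode]
      push_cast
      ring
    rw [hexp, Complex.real_smul, Complex.real_smul]
    push_cast
    ring

/-- **Time-ordered integral identity**: for `t > 0` and complex `γ₁,…,γ_q`,
`(i)^q ∫₀^t dt_q ⋯ ∫₀^{t₂} dt₁ e^{i(γ_q t_q + ⋯ + γ₁ t₁)} = e^{it[x₀,…,x_{q−1},0]}`
where `x_j = ∑_{k=j+1}^q γ_k` and the right-hand side is the divided difference of
`x ↦ e^{ixt}` at the indicated nodes. -/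
theorem orderedInt_eq_expDD (q : ℕ) (hq : 1 ≤ q) (t : ℝ) (ht : 0 < t)
    (γ : Fin q → ℂ) :
    Complex.I ^ q * orderedInt ((List.ofFn γ).reverse) t =
      expDD (t : ℂ) (fun j : Fin (q + 1) =>
        ∑ k : Fin q, if (j : ℕ) ≤ (k : ℕ) then γ k else 0) :=
  key_lemma q t ht.le γ
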